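/- Let R ⊆ ℝ^m be a connected set, let d be a positive integer, and let a_0, …, a_d : ℝ^m → ℝ be continuous functions. For each k ∈ ℝ^m let P_k(X) = Σ_{j=0}^{d} a_j(k)·X^j, viewed as a real polynomial in X. Assume that for every k ∈ R the leading coefficient a_d(k) ≠ 0 and P_k is separable (P_k has no repeated roots, equivalently P_k is coprime to its derivative). Then the function k ↦ card { x ∈ ℝ | P_k(x) = 0 } is constant on R. -/

import Mathlib

open Polynomial Set Filter Topology

namespace CardRootsAux

variable {m : ℕ}

lemma eval_eq (d : ℕ) (a : ℕ → (Fin m → ℝ) → ℝ) (P : (Fin m → ℝ) → Polynomial ℝ)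
    (hP : ∀ k, P k = ∑ j ∈ Finset.range (d + 1), Polynomial.C (a j k) * Polynomial.X ^ j)
    (k : Fin m → ℝ) (x : ℝ) :
    (P k).eval x = ∑ j ∈ Finset.range (d + 1), a j k * x ^ j := by
  rw [hP]
  simp [Polynomial.eval_finset_sum]

lemma deriv_eval_eq (d : ℕ) (a : ℕ → (Fin m → ℝ) → ℝ) (P : (Fin m → ℝ) → Polynomial ℝ)
    (hP : ∀ k, P k = ∑ j ∈ Finset.range (d + 1), Polynomial.C (a j k) * Polynomial.X ^ j)
    (k : Fin m → ℝ) (x : ℝ) :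
    (P k).derivative.eval x = ∑ j ∈ Finset.range (d + 1), a j k * ((j : ℝ) * x ^ (j - 1)) := by
  rw [hP, Polynomial.derivative_sum]
  simp [Polynomial.derivative_C_mul_X_pow, Polynomial.derivative_X_pow, Polynomial.eval_finset_sum, mul_assoc]

lemma contF (d : ℕ) (a : ℕ → (Fin m → ℝ) → ℝ) (ha : ∀ j ≤ d, Continuous (a j)) :
    Continuous (fun q : (Fin m → ℝ) × ℝ => ∑ j ∈ Finset.range (d + 1), a j q.1 * q.2 ^ j) := by
  apply continuous_finset_sum
  intro j hj
  rw [Finset.mem_range] at hj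
  exact ((ha j (by omega)).comp continuous_fst).mul (continuous_snd.pow j)

lemma contF' (d : ℕ) (a : ℕ → (Fin m → ℝ) → ℝ) (ha : ∀ j ≤ d, Continuous (a j)) :
    Continuous (fun q : (Fin m → ℝ) × ℝ =>
      ∑ j ∈ Finset.range (d + 1), a j q.1 * ((j : ℝ) * q.2 ^ (j - 1))) := by
  apply continuous_finset_sum
  intro j hj
  rw [Finset.mem_range] at hj
  exact ((ha j (by omega)).comp continuous_fst).mul
    ((continuous_const.mul ((continuous_snd.pow (j - 1)))))

lemma root_bound (d : ℕ) (hd : 0 < d) (b : ℕ → ℝ) (hb : b d ≠ 0) (x : ℝ)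
    (hx : 1 + (∑ j ∈ Finset.range d, |b j|) / |b d| ≤ |x|) :
    ∑ j ∈ Finset.range (d + 1), b j * x ^ j ≠ 0 := by
  set S := ∑ j ∈ Finset.range d, |b j| with hS
  have hS0 : 0 ≤ S := Finset.sum_nonneg fun j _ => abs_nonneg _
  have hA : 0 < |b d| := abs_pos.mpr hb
  have hx1 : (1 : ℝ) ≤ |x| := le_trans (by have := div_nonneg hS0 (abs_nonneg (b d)); linarith) hx
  have hxp : (1 : ℝ) ≤ |x| ^ (d - 1) := one_le_pow₀ hx1
  have h1 : |∑ j ∈ Finset.range d, b j * x ^ j| ≤ S * |x| ^ (d - 1) := by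
    calc |∑ j ∈ Finset.range d, b j * x ^ j| ≤ ∑ j ∈ Finset.range d, |b j * x ^ j| :=
          Finset.abs_sum_le_sum_abs _ _
      _ ≤ ∑ j ∈ Finset.range d, |b j| * |x| ^ (d - 1) := by
          apply Finset.sum_le_sum
          intro j hj
          rw [Finset.mem_range] at hj
          rw [abs_mul, abs_pow]
          exact mul_le_mul_of_nonneg_left (pow_le_pow_right₀ hx1 (by omega)) (abs_nonneg _)
      _ = S * |x| ^ (d - 1) := by rw [← Finset.sum_mul]
  have h2 : |b d| + S * |x| ^ (d - 1) ≤ |b d * x ^ d| := by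
    have hxd : |x| ^ d = |x| ^ (d - 1) * |x| := by
      rw [← pow_succ]
      congr 1
      omega
    rw [abs_mul, abs_pow, hxd, ← mul_assoc]
    have hBx : |b d| + S ≤ |b d| * |x| := by
      have : |b d| * (1 + S / |b d|) ≤ |b d| * |x| :=
        mul_le_mul_of_nonneg_left hx (abs_nonneg _)
      calc |b d| + S = |b d| * (1 + S / |b d|) := by field_simp
        _ ≤ |b d| * |x| := this
    calc |b d| + S * |x| ^ (d - 1)
        ≤ |b d| * |x| ^ (d - 1) + S * |x| ^ (d - 1) := by nlinarith
      _ = (|b d| + S) * |x| ^ (d - 1) := by ring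
      _ ≤ |b d| * |x| * |x| ^ (d - 1) := by nlinarith
      _ = |b d| * |x| ^ (d - 1) * |x| := by ring
  intro h0
  rw [Finset.sum_range_succ] at h0
  have : b d * x ^ d = -(∑ j ∈ Finset.range d, b j * x ^ j) := by linarith
  rw [this, abs_neg] at h2
  nlinarith

lemma mono_of_deriv_ne (p : Polynomial ℝ) (l u : ℝ) (hlu : l ≤ u)
    (h : ∀ x ∈ Set.Icc l u, p.derivative.eval x ≠ 0) :
    Set.InjOn (fun x => p.eval x) (Set.Icc l u) ∧
    (∀ r ∈ Set.Ioo l u, p.eval r = 0 → p.eval l * p.eval u < 0) := by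
  have hcont : ContinuousOn (fun x => p.derivative.eval x) (Set.Icc l u) :=
    (p.derivative.continuous_aeval).continuousOn
  have hsign : (∀ x ∈ Set.Icc l u, 0 < p.derivative.eval x) ∨
      (∀ x ∈ Set.Icc l u, p.derivative.eval x < 0) := by
    rcases (h l ⟨le_rfl, hlu⟩).lt_or_gt with hl | hl
    · right
      intro x hx
      by_contra hx0
      push_neg at hx0
      have hx0' : 0 < p.derivative.eval x := lt_of_le_of_ne hx0 (Ne.symm (h x hx))
      have himg := intermediate_value_Ioo hx.1 (hcont.mono (Set.Icc_subset_Icc le_rfl hx.2))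
      have h0 : (0:ℝ) ∈ Set.Ioo (p.derivative.eval l) (p.derivative.eval x) := ⟨hl, hx0'⟩
      obtain ⟨y, hy, hy0⟩ := himg h0
      exact h y ⟨le_of_lt hy.1, le_trans (le_of_lt hy.2) hx.2⟩ hy0
    · left
      intro x hx
      by_contra hx0
      push_neg at hx0
      have hx0' : p.derivative.eval x < 0 := lt_of_le_of_ne hx0 (h x hx)
      have himg := intermediate_value_Ioo' hx.1 (hcont.mono (Set.Icc_subset_Icc le_rfl hx.2))
      have h0 : (0:ℝ) ∈ Set.Ioo (p.derivative.eval x) (p.derivative.eval l) := ⟨hx0', hl⟩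
      obtain ⟨y, hy, hy0⟩ := himg h0
      exact h y ⟨le_of_lt hy.1, le_trans (le_of_lt hy.2) hx.2⟩ hy0
  have hpc : ContinuousOn (fun x => p.eval x) (Set.Icc l u) :=
    (p.continuous_aeval).continuousOn
  rcases hsign with hpos | hneg
  · have hmono : StrictMonoOn (fun x => p.eval x) (Set.Icc l u) := by
      apply strictMonoOn_of_deriv_pos (convex_Icc l u) hpc
      intro x hx
      rw [interior_Icc] at hx
      rw [Polynomial.deriv]
      exact hpos x ⟨le_of_lt hx.1, le_of_lt hx.2⟩
    refine ⟨hmono.injOn, fun r hr hr0 => ?_⟩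
    have h1 : p.eval l < p.eval r := hmono ⟨le_rfl, hlu⟩ ⟨le_of_lt hr.1, le_of_lt hr.2⟩ hr.1
    have h2 : p.eval r < p.eval u := hmono ⟨le_of_lt hr.1, le_of_lt hr.2⟩ ⟨hlu, le_rfl⟩ hr.2
    rw [hr0] at h1 h2
    exact mul_neg_of_neg_of_pos h1 h2
  · have hmono : StrictAntiOn (fun x => p.eval x) (Set.Icc l u) := by
      apply strictAntiOn_of_deriv_neg (convex_Icc l u) hpc
      intro x hx
      rw [interior_Icc] at hx
      rw [Polynomial.deriv]
      exact hneg x ⟨le_of_lt hx.1, le_of_lt hx.2⟩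
    refine ⟨hmono.injOn, fun r hr hr0 => ?_⟩
    have h1 : p.eval r < p.eval l := hmono ⟨le_rfl, hlu⟩ ⟨le_of_lt hr.1, le_of_lt hr.2⟩ hr.1
    have h2 : p.eval u < p.eval r := hmono ⟨le_of_lt hr.1, le_of_lt hr.2⟩ ⟨hlu, le_rfl⟩ hr.2
    rw [hr0] at h1 h2
    exact mul_neg_of_pos_of_neg h1 h2

lemma exists_root_of_sign (p : Polynomial ℝ) (l u : ℝ) (hlu : l ≤ u)
    (h : p.eval l * p.eval u < 0) : ∃ x ∈ Set.Ioo l u, p.eval x = 0 := by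
  have hpc : ContinuousOn (fun x => p.eval x) (Set.Icc l u) :=
    (p.continuous_aeval).continuousOn
  rcases mul_neg_iff.mp h with ⟨h1, h2⟩ | ⟨h1, h2⟩
  · obtain ⟨x, hx, hx0⟩ := intermediate_value_Ioo' hlu hpc (⟨h2, h1⟩ :
      (0:ℝ) ∈ Set.Ioo (p.eval u) (p.eval l))
    exact ⟨x, hx, hx0⟩
  · obtain ⟨x, hx, hx0⟩ := intermediate_value_Ioo hlu hpc (⟨h1, h2⟩ :
      (0:ℝ) ∈ Set.Ioo (p.eval l) (p.eval u))
    exact ⟨x, hx, hx0⟩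
lemma key (d : ℕ) (hd : 0 < d) (a : ℕ → (Fin m → ℝ) → ℝ) (ha : ∀ j ≤ d, Continuous (a j))
    (P : (Fin m → ℝ) → Polynomial ℝ)
    (hP : ∀ k, P k = ∑ j ∈ Finset.range (d + 1), Polynomial.C (a j k) * Polynomial.X ^ j)
    (k₀ : Fin m → ℝ) (h0 : a d k₀ ≠ 0) (hs : (P k₀).Separable) :
    ∀ᶠ k in 𝓝 k₀, a d k ≠ 0 →
      Set.ncard {x : ℝ | (P k).IsRoot x} = Set.ncard {x : ℝ | (P k₀).IsRoot x} := by
  classical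
  set F : (Fin m → ℝ) → ℝ → ℝ := fun k x => ∑ j ∈ Finset.range (d + 1), a j k * x ^ j with hF
  set G : (Fin m → ℝ) → ℝ → ℝ :=
    fun k x => ∑ j ∈ Finset.range (d + 1), a j k * ((j : ℝ) * x ^ (j - 1)) with hG
  have hev : ∀ k x, (P k).eval x = F k x := eval_eq d a P hP
  have hdev : ∀ k x, (P k).derivative.eval x = G k x := deriv_eval_eq d a P hP
  have hFc : Continuous (fun q : (Fin m → ℝ) × ℝ => F q.1 q.2) := contF d a ha
  have hGc : Continuous (fun q : (Fin m → ℝ) × ℝ => G q.1 q.2) := contF' d a ha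
  set B : (Fin m → ℝ) → ℝ := fun k => 1 + (∑ j ∈ Finset.range d, |a j k|) / |a d k| with hB
  have hBval : ∀ k, a d k ≠ 0 → ∀ x : ℝ, (P k).IsRoot x → |x| < B k := by
    intro k hk x hx
    by_contra hcon
    push_neg at hcon
    have h2 : F k x = 0 := by rw [← hev]; exact hx
    exact root_bound d hd (fun j => a j k) hk x hcon h2
  have hBc : ContinuousAt B k₀ := by
    apply ContinuousAt.add continuousAt_const
    apply ContinuousAt.div
    · exact (continuous_finset_sum _ fun j hj =>
        (ha j (by have := Finset.mem_range.mp hj; omega)).abs).continuousAt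
    · exact ((ha d le_rfl).abs).continuousAt
    · exact abs_ne_zero.mpr h0
  have hB1 : (1:ℝ) ≤ B k₀ := by
    have h1 : 0 ≤ (∑ j ∈ Finset.range d, |a j k₀|) / |a d k₀| :=
      div_nonneg (Finset.sum_nonneg fun j _ => abs_nonneg _) (abs_nonneg _)
    show (1:ℝ) ≤ 1 + (∑ j ∈ Finset.range d, |a j k₀|) / |a d k₀|
    linarith
  set M : ℝ := B k₀ + 1 with hM
  have hpne : P k₀ ≠ 0 := by
    intro hcon
    have h1 := root_bound d hd (fun j => a j k₀) h0 (B k₀)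
      (by rw [abs_of_nonneg (by linarith : (0:ℝ) ≤ B k₀)])
    apply h1
    have h2 : (P k₀).eval (B k₀) = F k₀ (B k₀) := hev _ _
    rw [hcon, Polynomial.eval_zero] at h2
    exact h2.symm
  have hZfin : {x : ℝ | (P k₀).IsRoot x}.Finite := Polynomial.finite_setOf_isRoot hpne
  set Zf : Finset ℝ := hZfin.toFinset with hZf
  have hZmem : ∀ x, x ∈ Zf ↔ (P k₀).IsRoot x := fun x => by
    simp [hZf, Set.Finite.mem_toFinset]
  have hsimple : ∀ r ∈ Zf, (P k₀).derivative.eval r ≠ 0 := by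
    intro r hr hcon
    obtain ⟨u, v, huv⟩ := hs
    have h1 := congrArg (Polynomial.eval r) huv
    have hr0 : (P k₀).eval r = 0 := (hZmem r).mp hr
    simp [hr0, hcon] at h1
  have hrM : ∀ r ∈ Zf, |r| < B k₀ := fun r hr => hBval k₀ h0 r ((hZmem r).mp hr)
  -- choose δ
  have hlt : ∀ c : ℝ, 0 < c → ∀ᶠ δ in 𝓝[>] (0:ℝ), δ < c := by
    intro c hc
    filter_upwards [Ioo_mem_nhdsGT_of_mem (left_mem_Ico.mpr hc)] with δ hδ
    exact hδ.2
  have hδex : ∃ δ : ℝ, 0 < δ ∧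
      (∀ r ∈ Zf, ∀ x ∈ Set.Icc (r - δ) (r + δ), G k₀ x ≠ 0) ∧
      (∀ r ∈ Zf, ∀ s ∈ Zf, r ≠ s → δ < |r - s| / 2) ∧
      (∀ r ∈ Zf, r + δ < M ∧ -M < r - δ) := by
    have h1 : ∀ᶠ δ in 𝓝[>] (0:ℝ), ∀ r ∈ Zf, ∀ x ∈ Set.Icc (r - δ) (r + δ), G k₀ x ≠ 0 := by
      rw [Filter.eventually_all_finset]
      intro r hr
      have hc : ContinuousAt (fun x => G k₀ x) r :=
        (hGc.comp (Continuous.prodMk_right k₀)).continuousAt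
      have hne : G k₀ r ≠ 0 := by rw [← hdev]; exact hsimple r hr
      have h2 := hc.eventually_ne hne
      rw [Metric.eventually_nhds_iff] at h2
      obtain ⟨ε, hε, hball⟩ := h2
      filter_upwards [hlt ε hε] with δ hδ x hx
      apply hball
      rw [Real.dist_eq]
      exact lt_of_le_of_lt (abs_sub_le_iff.mpr ⟨by linarith [hx.2], by linarith [hx.1]⟩) hδ
    have h2 : ∀ᶠ δ in 𝓝[>] (0:ℝ), ∀ r ∈ Zf, ∀ s ∈ Zf, r ≠ s → δ < |r - s| / 2 := by
      rw [Filter.eventually_all_finset]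
      intro r hr
      rw [Filter.eventually_all_finset]
      intro s hs
      by_cases hrs : r = s
      · exact Filter.Eventually.of_forall fun δ h => absurd hrs h
      · filter_upwards [hlt (|r - s| / 2) (by
          have : r - s ≠ 0 := sub_ne_zero.mpr hrs
          positivity)] with δ hδ _
        exact hδ
    have h3 : ∀ᶠ δ in 𝓝[>] (0:ℝ), ∀ r ∈ Zf, r + δ < M ∧ -M < r - δ := by
      rw [Filter.eventually_all_finset]
      intro r hr
      have hrB := hrM r hr
      have habs := abs_lt.mp hrB
      have e1 := hlt (M - r) (by simp only [hM]; linarith [habs.2])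
      have e2 := hlt (r + M) (by simp only [hM]; linarith [habs.1])
      filter_upwards [e1, e2] with δ hδ1 hδ2
      constructor <;> linarith
    have h0' : ∀ᶠ δ in 𝓝[>] (0:ℝ), 0 < δ := eventually_mem_nhdsWithin
    obtain ⟨δ, hp, hh1, hh2, hh3⟩ := (h0'.and (h1.and (h2.and h3))).exists
    exact ⟨δ, hp, hh1, hh2, hh3⟩
  obtain ⟨δ, hδ0, hδG, hδsep, hδM⟩ := hδex
  -- eventual conditions in k
  have hEa : ∀ᶠ k in 𝓝 k₀, B k < M := hBc.tendsto.eventually_lt_const (by linarith) 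
  set K' : Set ℝ := Set.Icc (-M) M \ ⋃ r ∈ Zf, Set.Ioo (r - δ) (r + δ) with hK'
  have hK'c : IsCompact K' := isCompact_Icc.diff (isOpen_biUnion fun r _ => isOpen_Ioo)
  have hEb : ∀ᶠ k in 𝓝 k₀, ∀ x ∈ K', F k x ≠ 0 := by
    apply hK'c.eventually_forall_of_forall_eventually
    intro x hx
    apply hFc.continuousAt.eventually_ne
    intro hcon
    have hroot : (P k₀).IsRoot x := by rw [IsRoot.def, hev]; exact hcon
    have hxZ : x ∈ Zf := (hZmem x).mpr hroot
    exact hx.2 (Set.mem_biUnion hxZ ⟨by linarith [hx.1.1, hδ0], by linarith [hx.1.2, hδ0]⟩)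
  have hEc : ∀ᶠ k in 𝓝 k₀, ∀ r ∈ Zf, ∀ x ∈ Set.Icc (r - δ) (r + δ), G k x ≠ 0 := by
    rw [Filter.eventually_all_finset]
    intro r hr
    apply isCompact_Icc.eventually_forall_of_forall_eventually
    intro x hx
    exact hGc.continuousAt.eventually_ne (hδG r hr x hx)
  have hEd : ∀ᶠ k in 𝓝 k₀, ∀ r ∈ Zf, F k (r - δ) * F k (r + δ) < 0 := by
    rw [Filter.eventually_all_finset]
    intro r hr
    have hlu : r - δ ≤ r + δ := by linarith
    have hmono := mono_of_deriv_ne (P k₀) (r - δ) (r + δ) hlu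
      (fun x hx => by rw [hdev]; exact hδG r hr x hx)
    have hneg : F k₀ (r - δ) * F k₀ (r + δ) < 0 := by
      rw [← hev, ← hev]
      exact hmono.2 r ⟨by linarith, by linarith⟩ ((hZmem r).mp hr)
    have hc : ContinuousAt (fun k => F k (r - δ) * F k (r + δ)) k₀ := by
      exact ((hFc.comp (Continuous.prodMk_left (r - δ))).mul
        (hFc.comp (Continuous.prodMk_left (r + δ)))).continuousAt
    exact hc.tendsto.eventually_lt_const hneg
  -- conclusion
  filter_upwards [hEa, hEb, hEc, hEd] with k hka hkb hkc hkd hk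
  have hsub : {x : ℝ | (P k).IsRoot x} ⊆ ⋃ r ∈ Zf, Set.Ioo (r - δ) (r + δ) := by
    intro x hx
    by_contra hxU
    have hxb : |x| < B k := hBval k hk x hx
    have hxI : x ∈ Set.Icc (-M) M := by
      have := abs_lt.mp (lt_trans hxb hka)
      exact ⟨le_of_lt this.1, le_of_lt this.2⟩
    exact hkb x ⟨hxI, hxU⟩ (by rw [← hev]; exact hx)
  have hinjOn : ∀ r ∈ Zf, Set.InjOn (fun x => (P k).eval x) (Set.Icc (r - δ) (r + δ)) := by
    intro r hr
    exact (mono_of_deriv_ne (P k) (r - δ) (r + δ) (by linarith)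
      (fun x hx => by rw [hdev]; exact hkc r hr x hx)).1
  have huniq : ∀ r : ℝ, ∃ x : ℝ, r ∈ Zf → ((P k).IsRoot x ∧ x ∈ Set.Ioo (r - δ) (r + δ)) := by
    intro r
    by_cases hr : r ∈ Zf
    · have hex := exists_root_of_sign (P k) (r - δ) (r + δ) (by linarith)
        (by rw [hev, hev]; exact hkd r hr)
      obtain ⟨x, hx1, hx2⟩ := hex
      exact ⟨x, fun _ => ⟨hx2, hx1⟩⟩
    · exact ⟨0, fun h => absurd h hr⟩
  choose xr hxr using huniq
  have hxr_root : ∀ r ∈ Zf, (P k).IsRoot (xr r) := fun r hr => (hxr r hr).1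
  have hxr_mem : ∀ r ∈ Zf, xr r ∈ Set.Ioo (r - δ) (r + δ) := fun r hr => (hxr r hr).2
  have hinj : Set.InjOn xr ↑Zf := by
    intro r hr s hs hrs
    by_contra hne
    have h1 := hxr_mem r hr
    have h2 := hxr_mem s hs
    have hsep' := hδsep r hr s hs hne
    have e1 : |r - xr r| < δ := abs_sub_lt_iff.mpr ⟨by linarith [h1.1], by linarith [h1.2]⟩
    have e2 : |xr r - s| < δ := by
      rw [hrs]
      exact abs_sub_lt_iff.mpr ⟨by linarith [h2.2], by linarith [h2.1]⟩
    have := abs_sub_le r (xr r) s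
    linarith
  have hroots_eq : {x : ℝ | (P k).IsRoot x} = xr '' ↑Zf := by
    ext x
    constructor
    · intro hx
      obtain ⟨r, hr, hxr'⟩ := Set.mem_iUnion₂.mp (hsub hx)
      refine ⟨r, hr, ?_⟩
      have hmem : x ∈ Set.Icc (r - δ) (r + δ) := Set.Ioo_subset_Icc_self hxr'
      have hmem2 : xr r ∈ Set.Icc (r - δ) (r + δ) := Set.Ioo_subset_Icc_self (hxr_mem r hr)
      exact (hinjOn r hr hmem2 hmem (by
        show (P k).eval (xr r) = (P k).eval x
        rw [hxr_root r hr, hx])).symm ▸ rfl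
    · rintro ⟨r, hr, rfl⟩
      exact hxr_root r hr
  have hk₀eq : {x : ℝ | (P k₀).IsRoot x} = ↑Zf := by
    ext x
    simp [hZmem]
  rw [hroots_eq, hk₀eq, Set.ncard_image_of_injOn hinj]

end CardRootsAux

/-- First ingredient of Lemma 1: over a connected parameter region on which the
leading coefficient does not vanish and the parametric polynomial is separable,
the number of distinct real roots is constant. -/
theorem constant_card_real_roots
    (m : ℕ) (R : Set (Fin m → ℝ)) (hR : IsConnected R)
    (d : ℕ) (hd : 0 < d)
    (a : ℕ → (Fin m → ℝ) → ℝ) (ha : ∀ j ≤ d, Continuous (a j))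
    (P : (Fin m → ℝ) → Polynomial ℝ)
    (hP : ∀ k, P k = ∑ j ∈ Finset.range (d + 1), Polynomial.C (a j k) * Polynomial.X ^ j)
    (hlead : ∀ k ∈ R, a d k ≠ 0)
    (hsep : ∀ k ∈ R, (P k).Separable) :
    ∀ k₁ ∈ R, ∀ k₂ ∈ R,
      Set.ncard {x : ℝ | (P k₁).IsRoot x} = Set.ncard {x : ℝ | (P k₂).IsRoot x} := by
  classical
  set f : (Fin m → ℝ) → ℕ := fun k => Set.ncard {x : ℝ | (P k).IsRoot x} with hf
  have hloc : ∀ k₀ : Fin m → ℝ, ∃ U : Set (Fin m → ℝ),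
      IsOpen U ∧ (k₀ ∈ R → (k₀ ∈ U ∧ ∀ k ∈ U ∩ R, f k = f k₀)) := by
    intro k₀
    by_cases h : k₀ ∈ R
    · have hev := CardRootsAux.key d hd a ha P hP k₀ (hlead k₀ h) (hsep k₀ h)
      rw [eventually_nhds_iff] at hev
      obtain ⟨U, hUmem, hUopen, hk₀U⟩ := hev
      exact ⟨U, hUopen, fun _ => ⟨hk₀U, fun k hk => hUmem k hk.1 (hlead k hk.2)⟩⟩
    · exact ⟨∅, isOpen_empty, fun h' => absurd h' h⟩
  choose U hUopen hU using hloc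
  intro k₁ hk₁ k₂ hk₂
  by_contra hne
  set V₁ : Set (Fin m → ℝ) := ⋃ k₀ ∈ {k | k ∈ R ∧ f k = f k₁}, U k₀ with hV₁
  set V₂ : Set (Fin m → ℝ) := ⋃ k₀ ∈ {k | k ∈ R ∧ f k ≠ f k₁}, U k₀ with hV₂
  have hV₁o : IsOpen V₁ := isOpen_biUnion fun k₀ _ => hUopen k₀
  have hV₂o : IsOpen V₂ := isOpen_biUnion fun k₀ _ => hUopen k₀
  have hcover : R ⊆ V₁ ∪ V₂ := by
    intro k hk
    by_cases h : f k = f k₁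
    · exact Or.inl (Set.mem_biUnion ⟨hk, h⟩ (hU k hk).1)
    · exact Or.inr (Set.mem_biUnion ⟨hk, h⟩ (hU k hk).1)
  have h1 : (R ∩ V₁).Nonempty := ⟨k₁, hk₁, Set.mem_biUnion ⟨hk₁, rfl⟩ (hU k₁ hk₁).1⟩
  have h2 : (R ∩ V₂).Nonempty :=
    ⟨k₂, hk₂, Set.mem_biUnion ⟨hk₂, fun h => hne h.symm⟩ (hU k₂ hk₂).1⟩
  obtain ⟨k, hkR, hkV₁, hkV₂⟩ := hR.isPreconnected V₁ V₂ hV₁o hV₂o hcover h1 h2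
  obtain ⟨r₁, hr₁, hkU₁⟩ := Set.mem_iUnion₂.mp hkV₁
  obtain ⟨r₂, hr₂, hkU₂⟩ := Set.mem_iUnion₂.mp hkV₂
  have e1 : f k = f k₁ := by
    rw [(hU r₁ hr₁.1).2 k ⟨hkU₁, hkR⟩]
    exact hr₁.2
  have e2 : f k ≠ f k₁ := by
    rw [(hU r₂ hr₂.1).2 k ⟨hkU₂, hkR⟩]
    exact hr₂.2
  exact e2 e1
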